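/- Classical degeneracy of the square of the Hodge operator: if g is symmetric on W (i.e. g(φ, φ′) = g(φ′, φ) for all φ, φ′ ∈ W), then for every k with 0 ≤ k ≤ N and every φ ∈ ΛᵏW, T(T(φ)) = (−1)^{k(N−k)} · T(T(1)) · φ, where T(T(1)) ∈ Λ⁰W = ℂ is a scalar. -/

import Mathlib

noncomputable section

/-- The `N`-dimensional complex vector space `W` with basis `(ω¹, …, ω^N)`. -/
abbrev W (N : ℕ) : Type := Fin N → ℂ

/-- The distinguished basis `(ω¹, …, ω^N)` of `W`. -/
def e (N : ℕ) : Fin N → W N := fun i => Pi.basisFun ℂ (Fin N) i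

/-- The full exterior algebra `ΛW`. -/
abbrev E (N : ℕ) : Type := ExteriorAlgebra ℂ (W N)

/-- The `k`-th exterior power `ΛᵏW`, as a submodule of `ΛW`. -/
def degE (N k : ℕ) : Submodule ℂ (E N) :=
  (LinearMap.range (ExteriorAlgebra.ι ℂ : W N →ₗ[ℂ] E N)) ^ k

/-- The basis monomial `ω^{a 0} ∧ ⋯ ∧ ω^{a (k-1)} ∈ ΛᵏW`. -/
def mono (N : ℕ) {k : ℕ} (a : Fin k → Fin N) : E N :=
  (List.ofFn fun j => ExteriorAlgebra.ι ℂ (e N (a j))).prod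

/-- `HodgeData N g G st m T` packages the classical data: a nondegenerate bilinear form
`g` on `W`, its extensions `G k` to the exterior powers `ΛᵏW` (via the permutation-sum
formula), the antilinear involution `st` of `ΛW` fixing every basis monomial, the volume
form `μ = m ω¹∧⋯∧ω^N`, and the operator `T` defined by
`φ* ∧ T(φ′) = (1/k!) G k (φ*, φ′) μ`, sending `ΛᵏW` into `Λ^{N−k}W`. -/
structure HodgeData (N : ℕ) (g : W N →ₗ[ℂ] W N →ₗ[ℂ] ℂ)
    (G : ℕ → (E N →ₗ[ℂ] E N →ₗ[ℂ] ℂ)) (st : E N →ₛₗ[starRingEnd ℂ] E N)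
    (m : ℂ) (T : E N →ₗ[ℂ] E N) : Prop where
  nondeg : LinearMap.BilinForm.Nondegenerate g
  m_ne : m ≠ 0
  hG : ∀ (k : ℕ) (a b : Fin k → Fin N),
    G k (mono N a) (mono N b) =
      ∑ π : Equiv.Perm (Fin k), ∑ π' : Equiv.Perm (Fin k),
        (((Equiv.Perm.sign π : ℤ) * (Equiv.Perm.sign π' : ℤ) : ℤ) : ℂ) *
          ∏ j : Fin k, g (e N (a (π j))) (e N (b (π' j)))
  hst : ∀ (k : ℕ) (a : Fin k → Fin N), st (mono N a) = mono N a
  hTdeg : ∀ k : ℕ, ∀ φ ∈ degE N k, T φ ∈ degE N (N - k)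
  hTdef : ∀ k : ℕ, ∀ φ ∈ degE N k, ∀ φ' ∈ degE N k,
    st φ * T φ' =
      (((k.factorial : ℂ))⁻¹ * G k (st φ) φ') • (m • mono N (fun j : Fin N => j))

namespace HodgeAux
open ExteriorAlgebra

variable {N : ℕ}

/-! ### Stage 1 : generic wedge lemmas -/

lemma mono_eq {k : ℕ} (a : Fin k → Fin N) :
    mono N a = ιMulti ℂ k (fun j => e N (a j)) := (ιMulti_apply _).symm

lemma wedge_mem {k : ℕ} (v : Fin k → W N) : ιMulti ℂ k v ∈ degE N k :=
  ιMulti_range ℂ k ⟨v, rfl⟩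

lemma mono_mem {k : ℕ} (a : Fin k → Fin N) : mono N a ∈ degE N k := by
  rw [mono_eq]; exact wedge_mem _

lemma wedge_cast {p q : ℕ} (h : p = q) (v : Fin q → W N) :
    ιMulti ℂ p (v ∘ Fin.cast h) = ιMulti ℂ q v := by
  subst h; rfl

lemma wedge_mul {k l : ℕ} (v : Fin k → W N) (w : Fin l → W N) :
    ιMulti ℂ k v * ιMulti ℂ l w = ιMulti ℂ (k + l) (Fin.append v w) := by
  rw [ιMulti_apply, ιMulti_apply, ιMulti_apply, ← List.prod_append, List.ofFn_add]
  simp only [Fin.append_left, Fin.append_right, Fin.append_left']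

lemma ι_mul_wedge {k : ℕ} (x : W N) (v : Fin k → W N) :
    ι ℂ x * ιMulti ℂ k v = ((-1 : ℂ)) ^ k • (ιMulti ℂ k v * ι ℂ x) := by
  induction k with
  | zero => simp [ιMulti_zero_apply]
  | succ n ih =>
    rw [ιMulti_succ_apply]
    have h1 : ι ℂ x * ι ℂ (v 0) = -(ι ℂ (v 0) * ι ℂ x) :=
      eq_neg_of_add_eq_zero_left (ι_add_mul_swap x (v 0))
    calc ι ℂ x * (ι ℂ (v 0) * ιMulti ℂ n (Matrix.vecTail v))
        = -(ι ℂ (v 0) * (ι ℂ x * ιMulti ℂ n (Matrix.vecTail v))) := by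
          rw [← mul_assoc, h1, neg_mul, mul_assoc]
      _ = -(ι ℂ (v 0) * ((-1:ℂ)^n • (ιMulti ℂ n (Matrix.vecTail v) * ι ℂ x))) := by rw [ih]
      _ = ((-1:ℂ))^(n+1) • (ι ℂ (v 0) * ιMulti ℂ n (Matrix.vecTail v) * ι ℂ x) := by
          rw [mul_smul_comm, ← neg_smul, ← mul_assoc, pow_succ, mul_neg_one]

lemma wedge_mul_comm {k l : ℕ} (v : Fin k → W N) (w : Fin l → W N) :
    ιMulti ℂ k v * ιMulti ℂ l w = ((-1 : ℂ)) ^ (k * l) • (ιMulti ℂ l w * ιMulti ℂ k v) := by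
  induction k with
  | zero => simp [ιMulti_zero_apply]
  | succ n ih =>
    rw [ιMulti_succ_apply (v := v), Nat.succ_mul, pow_add]
    calc ι ℂ (v 0) * ιMulti ℂ n (Matrix.vecTail v) * ιMulti ℂ l w
        = ι ℂ (v 0) * ((-1:ℂ)^(n*l) • (ιMulti ℂ l w * ιMulti ℂ n (Matrix.vecTail v))) := by
          rw [mul_assoc, ih]
      _ = (-1:ℂ)^(n*l) • (ι ℂ (v 0) * ιMulti ℂ l w * ιMulti ℂ n (Matrix.vecTail v)) := by
          rw [mul_smul_comm, mul_assoc]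
      _ = (-1:ℂ)^(n*l) • (((-1:ℂ)^l • (ιMulti ℂ l w * ι ℂ (v 0))) * ιMulti ℂ n (Matrix.vecTail v)) := by
          rw [ι_mul_wedge]
      _ = ((-1:ℂ)^(n*l) * (-1:ℂ)^l) • (ιMulti ℂ l w * (ι ℂ (v 0) * ιMulti ℂ n (Matrix.vecTail v))) := by
          rw [smul_mul_assoc, smul_smul, mul_assoc]

lemma wedge_expand (f : Module.Basis (Fin N) ℂ (W N)) {k : ℕ} (v : Fin k → W N) :
    ιMulti ℂ k v = ∑ r : Fin k → Fin N,
      (∏ j, f.repr (v j) (r j)) • ιMulti ℂ k (fun j => f (r j)) := by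
  have h1 : v = fun j => ∑ i : Fin N, f.repr (v j) i • f i := by
    funext j; rw [Module.Basis.sum_repr]
  conv_lhs => rw [h1]
  rw [show (ιMulti ℂ k (M := W N)) (fun j => ∑ i : Fin N, f.repr (v j) i • f i)
      = (ιMulti ℂ k (M := W N)).toMultilinearMap (fun j => ∑ i : Fin N, f.repr (v j) i • f i) from rfl]
  rw [MultilinearMap.map_sum]
  refine Finset.sum_congr rfl fun r _ => ?_
  exact MultilinearMap.map_smul_univ _ _ _

/-! ### Stage 2 : the top-degree functional -/

lemma sign_smul_eq {k : ℕ} (σ : Equiv.Perm (Fin k)) (x : E N) :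
    (Equiv.Perm.sign σ) • x = (((Equiv.Perm.sign σ : ℤ) : ℂ)) • x := by
  rw [Units.smul_def, Int.cast_smul_eq_zsmul]

/-- The top-degree coordinate functional. -/
def ell (N : ℕ) : E N →ₗ[ℂ] ℂ :=
  ExteriorAlgebra.liftAlternating
    (Function.update (fun _ => 0) N ((Pi.basisFun ℂ (Fin N)).det))

lemma ell_wedge (v : Fin N → W N) :
    ell N (ιMulti ℂ N v) = (Pi.basisFun ℂ (Fin N)).det v := by
  rw [ell, liftAlternating_apply_ιMulti, Function.update_self]

lemma ell_mono_id : ell N (mono N (fun j : Fin N => j)) = 1 := by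
  rw [mono_eq, show (fun j : Fin N => e N j) = ⇑(Pi.basisFun ℂ (Fin N)) from rfl]
  rw [ell_wedge, Module.Basis.det_self]

lemma mono_id_ne_zero : (mono N (fun j : Fin N => j)) ≠ 0 := fun h => by
  have := ell_mono_id (N := N); rw [h, map_zero] at this
  exact one_ne_zero (α := ℂ) this.symm

lemma basis_wedge_reduce (r : Fin N → Fin N) :
    ∃ c : ℂ, ιMulti ℂ N (fun j => e N (r j)) = c • mono N (fun j : Fin N => j) := by
  by_cases hr : Function.Injective r
  · have hb : Function.Bijective r := Finite.injective_iff_bijective.1 hr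
    set σ := Equiv.ofBijective r hb with hσ
    refine ⟨((Equiv.Perm.sign σ : ℤ) : ℂ), ?_⟩
    have h2 : (fun j => e N (r j)) = (fun j => e N j) ∘ ⇑σ := rfl
    rw [h2, AlternatingMap.map_perm, mono_eq, sign_smul_eq]
  · rw [Function.not_injective_iff] at hr
    obtain ⟨i, j, hij, hne⟩ := hr
    refine ⟨0, ?_⟩
    rw [zero_smul]
    exact AlternatingMap.map_eq_zero_of_eq _ _ (by rw [hij]) hne

lemma top_wedge (v : Fin N → W N) :
    ιMulti ℂ N v = (ell N (ιMulti ℂ N v)) • mono N (fun j : Fin N => j) := by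
  obtain ⟨c, hc⟩ : ∃ c : ℂ, ιMulti ℂ N v = c • mono N (fun j : Fin N => j) := by
    choose κ hκ using fun r => basis_wedge_reduce (N := N) r
    refine ⟨∑ r : Fin N → Fin N, (∏ j, (Pi.basisFun ℂ (Fin N)).repr (v j) (r j)) * κ r, ?_⟩
    rw [wedge_expand (Pi.basisFun ℂ (Fin N)) v, Finset.sum_smul]
    refine Finset.sum_congr rfl fun r _ => ?_
    rw [show ιMulti ℂ N (fun j => (Pi.basisFun ℂ (Fin N)) (r j))
        = ιMulti ℂ N (fun j => e N (r j)) from rfl, hκ r, smul_smul]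
  rw [hc, map_smul, ell_mono_id, smul_eq_mul, mul_one]

/-- Orthogonal basis for a nondegenerate symmetric form. -/
lemma exists_orth (g : W N →ₗ[ℂ] W N →ₗ[ℂ] ℂ) (hnd : LinearMap.BilinForm.Nondegenerate g)
    (hsymm : ∀ v w : W N, g v w = g w v) :
    ∃ f : Module.Basis (Fin N) ℂ (W N),
      (∀ i j, i ≠ j → g (f i) (f j) = 0) ∧ (∀ i, g (f i) (f i) ≠ 0) := by
  have hs : g.IsSymm := ⟨fun x y => by simp [hsymm x y]⟩
  obtain ⟨v, hv⟩ := LinearMap.BilinForm.exists_orthogonal_basis hs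
  have hcard : Module.finrank ℂ (W N) = N := Module.finrank_fin_fun ℂ
  refine ⟨v.reindex (finCongr hcard), fun i j hij => ?_, fun i => ?_⟩
  · rw [Module.Basis.reindex_apply, Module.Basis.reindex_apply]
    exact hv (fun h => hij (by simpa using congrArg (finCongr hcard) h))
  · rw [Module.Basis.reindex_apply]
    intro h0
    set x := v ((finCongr hcard).symm i) with hx
    have hall : ∀ j, g x (v j) = 0 := by
      intro j
      by_cases hj : (finCongr hcard).symm i = j
      · rw [← hj]; exact h0
      · exact hv hj
    have hg0 : g x = 0 := by
      apply Module.Basis.ext v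
      intro j; rw [hall j]; rfl
    exact Module.Basis.ne_zero v _ (hnd.1 x (fun y => by rw [hg0]; rfl))

/-! ### Stage 3 : determinant form of the extended bilinear form -/

section Gdet

variable {g : W N →ₗ[ℂ] W N →ₗ[ℂ] ℂ} {G : ℕ → (E N →ₗ[ℂ] E N →ₗ[ℂ] ℂ)}

/-- The Gram matrix of two tuples of vectors. -/
def gram (g : W N →ₗ[ℂ] W N →ₗ[ℂ] ℂ) {k : ℕ} (v w : Fin k → W N) : Matrix (Fin k) (Fin k) ℂ :=
  Matrix.of fun i j => g (v i) (w j)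

lemma vec_expand (x : W N) : x = ∑ p : Fin N, x p • e N p := by
  have h : ∀ p : Fin N, x p • e N p = Pi.single p (x p) := by
    intro p; funext j
    simp [e, Pi.basisFun_apply, Pi.single_apply, mul_ite]
  rw [Finset.sum_congr rfl fun p _ => h p, Finset.univ_sum_single]

lemma g_expand_left (x y : W N) : g x y = ∑ p : Fin N, x p * g (e N p) y := by
  conv_lhs => rw [vec_expand x]
  rw [map_sum, LinearMap.sum_apply]
  refine Finset.sum_congr rfl fun p _ => ?_
  rw [map_smul, LinearMap.smul_apply, smul_eq_mul]

lemma g_expand_right (x y : W N) : g x y = ∑ q : Fin N, y q * g x (e N q) := by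
  conv_lhs => rw [vec_expand y]
  rw [map_sum]
  refine Finset.sum_congr rfl fun q _ => ?_
  rw [map_smul, smul_eq_mul]

lemma det_gram_expand_left {k : ℕ} (v w : Fin k → W N) :
    (gram g v w).det = ∑ r : Fin k → Fin N,
      (∏ i, v i (r i)) * (gram g (fun i => e N (r i)) w).det := by
  have hM : gram g v w = fun i => ∑ p : Fin N, v i p • (fun j => g (e N p) (w j)) := by
    funext i j
    rw [Finset.sum_apply]
    simp only [Pi.smul_apply, smul_eq_mul]
    exact g_expand_left (v i) (w j)
  calc (gram g v w).det
      = (Matrix.detRowAlternating (R := ℂ) (n := Fin k)).toMultilinearMap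
          (fun i => ∑ p : Fin N, v i p • (fun j => g (e N p) (w j))) := by
        rw [show ((Matrix.detRowAlternating (R := ℂ) (n := Fin k)).toMultilinearMap
            (fun i => ∑ p : Fin N, v i p • (fun j => g (e N p) (w j))) : ℂ)
          = (Matrix.detRowAlternating (R := ℂ) (n := Fin k))
            (fun i => ∑ p : Fin N, v i p • (fun j => g (e N p) (w j))) from rfl, ← hM]
        rfl
    _ = ∑ r : Fin k → Fin N, (Matrix.detRowAlternating (R := ℂ) (n := Fin k)).toMultilinearMap
          (fun i => v i (r i) • (fun j => g (e N (r i)) (w j))) :=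
        MultilinearMap.map_sum _ _
    _ = _ := by
        refine Finset.sum_congr rfl fun r _ => ?_
        rw [MultilinearMap.map_smul_univ, smul_eq_mul]
        rfl

lemma det_gram_expand_right {k : ℕ} (u w : Fin k → W N) :
    (gram g u w).det = ∑ s : Fin k → Fin N,
      (∏ j, w j (s j)) * (gram g u (fun j => e N (s j))).det := by
  rw [← Matrix.det_transpose (gram g u w)]
  have hM : (gram g u w).transpose
      = fun j => ∑ q : Fin N, w j q • (fun i => g (u i) (e N q)) := by
    funext j i
    rw [Finset.sum_apply]
    simp only [Pi.smul_apply, smul_eq_mul, Matrix.transpose_apply]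
    exact g_expand_right (u i) (w j)
  calc (gram g u w).transpose.det
      = (Matrix.detRowAlternating (R := ℂ) (n := Fin k)).toMultilinearMap
          (fun j => ∑ q : Fin N, w j q • (fun i => g (u i) (e N q))) := by
        rw [show ((Matrix.detRowAlternating (R := ℂ) (n := Fin k)).toMultilinearMap
            (fun j => ∑ q : Fin N, w j q • (fun i => g (u i) (e N q))) : ℂ)
          = (Matrix.detRowAlternating (R := ℂ) (n := Fin k))
            (fun j => ∑ q : Fin N, w j q • (fun i => g (u i) (e N q))) from rfl, ← hM]
        rfl
    _ = ∑ s : Fin k → Fin N, (Matrix.detRowAlternating (R := ℂ) (n := Fin k)).toMultilinearMap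
          (fun j => w j (s j) • (fun i => g (u i) (e N (s j)))) :=
        MultilinearMap.map_sum _ _
    _ = _ := by
        refine Finset.sum_congr rfl fun s _ => ?_
        rw [MultilinearMap.map_smul_univ, smul_eq_mul]
        congr 1
        rw [← Matrix.det_transpose (gram g u (fun j => e N (s j)))]
        rfl

lemma perm_sum_eq_det {k : ℕ} (v w : Fin k → W N) :
    (∑ π : Equiv.Perm (Fin k), ∑ π' : Equiv.Perm (Fin k),
        (((Equiv.Perm.sign π : ℤ) * (Equiv.Perm.sign π' : ℤ) : ℤ) : ℂ) *
          ∏ j : Fin k, g (v (π j)) (w (π' j)))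
      = (k.factorial : ℂ) * (gram g v w).det := by
  have hdet : (gram g v w).det = ∑ τ : Equiv.Perm (Fin k),
      ((Equiv.Perm.sign τ : ℤ) : ℂ) * ∏ j : Fin k, g (v j) (w (τ j)) := by
    rw [← Matrix.det_transpose, Matrix.det_apply]
    refine Finset.sum_congr rfl fun τ _ => ?_
    rw [Units.smul_def, zsmul_eq_mul]
    rfl
  have inner : ∀ π : Equiv.Perm (Fin k),
      (∑ π' : Equiv.Perm (Fin k),
        (((Equiv.Perm.sign π : ℤ) * (Equiv.Perm.sign π' : ℤ) : ℤ) : ℂ) *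
          ∏ j : Fin k, g (v (π j)) (w (π' j))) = (gram g v w).det := by
    intro π
    rw [hdet]
    rw [← Equiv.sum_comp (Equiv.mulRight π) (fun π' =>
      (((Equiv.Perm.sign π : ℤ) * (Equiv.Perm.sign π' : ℤ) : ℤ) : ℂ) *
          ∏ j : Fin k, g (v (π j)) (w (π' j)))]
    refine Finset.sum_congr rfl fun τ _ => ?_
    have hsq : ((Equiv.Perm.sign π : ℤ)) * ((Equiv.Perm.sign π : ℤ)) = 1 := by
      rw [← Units.val_mul, Int.units_mul_self, Units.val_one]
    have hsgn : ((Equiv.Perm.sign π : ℤ) * (Equiv.Perm.sign (Equiv.mulRight π τ) : ℤ) : ℤ)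
        = ((Equiv.Perm.sign τ : ℤ) : ℤ) := by
      have h2 : Equiv.mulRight π τ = τ * π := rfl
      rw [h2, Equiv.Perm.sign_mul, Units.val_mul]
      linear_combination ((Equiv.Perm.sign τ : ℤ)) * hsq
    have hprod : (∏ j : Fin k, g (v (π j)) (w ((Equiv.mulRight π τ) j)))
        = ∏ j : Fin k, g (v j) (w (τ j)) := by
      have h1 : ∀ j, (Equiv.mulRight π τ) j = τ (π j) := fun j => rfl
      rw [Finset.prod_congr rfl fun j _ => by rw [h1 j]]
      exact Equiv.prod_comp π (fun j => g (v j) (w (τ j)))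
    rw [hprod, hsgn]
  rw [Finset.sum_congr rfl (fun π _ => inner π), Finset.sum_const, Finset.card_univ,
    Fintype.card_perm, nsmul_eq_mul, Fintype.card_fin]

lemma G_wedge (hG : ∀ (k : ℕ) (a b : Fin k → Fin N),
      G k (mono N a) (mono N b) =
        ∑ π : Equiv.Perm (Fin k), ∑ π' : Equiv.Perm (Fin k),
          (((Equiv.Perm.sign π : ℤ) * (Equiv.Perm.sign π' : ℤ) : ℤ) : ℂ) *
            ∏ j : Fin k, g (e N (a (π j))) (e N (b (π' j))))
    {k : ℕ} (v w : Fin k → W N) :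
    G k (ιMulti ℂ k v) (ιMulti ℂ k w) = (k.factorial : ℂ) * (gram g v w).det := by
  have hmono : ∀ (a b : Fin k → Fin N), G k (mono N a) (mono N b)
      = (k.factorial : ℂ) * (gram g (fun i => e N (a i)) (fun j => e N (b j))).det := by
    intro a b
    rw [hG k a b]
    exact perm_sum_eq_det (fun i => e N (a i)) (fun j => e N (b j))
  have hme : ∀ r : Fin k → Fin N,
      ιMulti ℂ k (fun j => (Pi.basisFun ℂ (Fin N)) (r j)) = mono N r :=
    fun r => (mono_eq r).symm
  rw [wedge_expand (Pi.basisFun ℂ (Fin N)) v, wedge_expand (Pi.basisFun ℂ (Fin N)) w, map_sum]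
  have hterm : ∀ s : Fin k → Fin N,
      (G k (∑ r : Fin k → Fin N, (∏ j, (Pi.basisFun ℂ (Fin N)).repr (v j) (r j)) •
          ιMulti ℂ k (fun j => (Pi.basisFun ℂ (Fin N)) (r j))))
        ((∏ j, (Pi.basisFun ℂ (Fin N)).repr (w j) (s j)) •
          ιMulti ℂ k (fun j => (Pi.basisFun ℂ (Fin N)) (s j)))
      = ∑ r : Fin k → Fin N, (∏ j, v j (r j)) * ((∏ j, w j (s j)) *
          ((k.factorial : ℂ) * (gram g (fun i => e N (r i)) (fun j => e N (s j))).det)) := by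
    intro s
    rw [map_sum, LinearMap.sum_apply]
    refine Finset.sum_congr rfl fun r _ => ?_
    rw [map_smul, LinearMap.map_smul (G k), LinearMap.smul_apply, hme r, hme s, hmono r s]
    simp only [Pi.basisFun_repr, smul_eq_mul]
    ring
  rw [Finset.sum_congr rfl fun s _ => hterm s]
  rw [det_gram_expand_left v w, Finset.mul_sum, Finset.sum_comm]
  refine Finset.sum_congr rfl fun r _ => ?_
  rw [det_gram_expand_right, Finset.mul_sum, Finset.mul_sum]
  refine Finset.sum_congr rfl fun s _ => ?_
  ring

end Gdet

/-! ### Stage 4 : monomials indexed by subsets -/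

section Fmono

variable (f : Module.Basis (Fin N) ℂ (W N))

/-- Increasing enumeration of a finite subset of `Fin N`. -/
def tup (s : Finset (Fin N)) : Fin s.card → Fin N := fun i => (s.orderIsoOfFin rfl i : Fin N)

lemma tup_mem (s : Finset (Fin N)) (i : Fin s.card) : tup s i ∈ s := (s.orderIsoOfFin rfl i).2

lemma tup_inj (s : Finset (Fin N)) : Function.Injective (tup s) := fun i j h =>
  (s.orderIsoOfFin rfl).injective (Subtype.ext h)

lemma tup_surj (s : Finset (Fin N)) (x : Fin N) (hx : x ∈ s) : ∃ i, tup s i = x :=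
  ⟨(s.orderIsoOfFin rfl).symm ⟨x, hx⟩, by
    simp [tup]⟩

/-- The basis monomial associated with a subset. -/
def F (s : Finset (Fin N)) : E N := ιMulti ℂ s.card (fun i => f (tup s i))

lemma F_mem (s : Finset (Fin N)) : F f s ∈ degE N s.card := wedge_mem _

lemma card_add (s : Finset (Fin N)) : s.card + sᶜ.card = N := by
  rw [Finset.card_compl, Fintype.card_fin]
  have h := Finset.card_le_univ s
  rw [Fintype.card_fin] at h
  omega

/-- Concatenation of the enumerations of `s` and `sᶜ`. -/
def cfun (s : Finset (Fin N)) : Fin (s.card + sᶜ.card) → Fin N :=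
  Fin.append (tup s) (tup sᶜ)

lemma fin_add_cases {p q : ℕ} (x : Fin (p + q)) :
    (∃ i : Fin p, x = Fin.castAdd q i) ∨ (∃ j : Fin q, x = Fin.natAdd p j) := by
  rcases lt_or_ge (x : ℕ) p with h | h
  · exact Or.inl ⟨⟨x, h⟩, Fin.ext rfl⟩
  · refine Or.inr ⟨⟨(x : ℕ) - p, ?_⟩, Fin.ext ?_⟩
    · have := x.isLt; omega
    · have := x.isLt
      simp only [Fin.natAdd]
      omega

lemma cfun_inj (s : Finset (Fin N)) : Function.Injective (cfun s) := by
  intro x y h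
  rcases fin_add_cases x with ⟨i, rfl⟩ | ⟨i, rfl⟩ <;>
    rcases fin_add_cases y with ⟨j, rfl⟩ | ⟨j, rfl⟩
  · rw [cfun, Fin.append_left, Fin.append_left] at h
    exact congrArg _ (tup_inj s h)
  · rw [cfun, Fin.append_left, Fin.append_right] at h
    have hs := tup_mem s i
    rw [h] at hs
    exact absurd hs (Finset.mem_compl.1 (tup_mem sᶜ j))
  · rw [cfun, Fin.append_right, Fin.append_left] at h
    have hs := tup_mem s j
    rw [← h] at hs
    exact absurd hs (Finset.mem_compl.1 (tup_mem sᶜ i))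
  · rw [cfun, Fin.append_right, Fin.append_right] at h
    exact congrArg _ (tup_inj sᶜ h)

/-- The permutation of `Fin N` obtained from enumerating `s` then `sᶜ`. -/
def sigma (s : Finset (Fin N)) : Equiv.Perm (Fin N) :=
  Equiv.ofBijective (cfun s ∘ Fin.cast (card_add s).symm)
    (Finite.injective_iff_bijective.1 ((cfun_inj s).comp (fun x y h => by
      have := congrArg Fin.val h
      exact Fin.ext this)))

/-- The sign of that permutation. -/
def eps (s : Finset (Fin N)) : ℂ := ((Equiv.Perm.sign (sigma s) : ℤ) : ℂ)

lemma eps_sq (s : Finset (Fin N)) : eps s * eps s = 1 := by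
  rw [eps, ← Int.cast_mul, ← Units.val_mul, Int.units_mul_self, Units.val_one, Int.cast_one]

lemma eps_ne_zero (s : Finset (Fin N)) : eps s ≠ 0 := fun h => by
  have := eps_sq s; rw [h, mul_zero] at this; exact zero_ne_one this

/-- The top monomial of the basis `f`. -/
def Ftop : E N := ιMulti ℂ N ⇑f

lemma F_mul_compl (s : Finset (Fin N)) : F f s * F f sᶜ = eps s • Ftop f := by
  rw [F, F, wedge_mul]
  have h1 : Fin.append (fun i => f (tup s i)) (fun i => f (tup sᶜ i))
      = fun x => f (cfun s x) := by
    funext x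
    rcases fin_add_cases x with ⟨i, rfl⟩ | ⟨j, rfl⟩
    · rw [Fin.append_left, cfun, Fin.append_left]
    · rw [Fin.append_right, cfun, Fin.append_right]
  rw [h1]
  have h2 : (fun x => f (cfun s x))
      = (fun x => f (sigma s x)) ∘ (Fin.cast (card_add s)) := by
    funext x
    simp only [Function.comp_apply, sigma, Equiv.ofBijective_apply]
    exact congrArg f (congrArg (cfun s) (Fin.ext rfl))
  rw [h2, wedge_cast (card_add s) (fun x => f (sigma s x))]
  rw [show (fun x => f (sigma s x)) = ⇑f ∘ ⇑(sigma s) from rfl, AlternatingMap.map_perm,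
    sign_smul_eq]
  rfl

lemma F_common_zero (s t : Finset (Fin N)) (x : Fin N) (hxs : x ∈ s) (hxt : x ∈ t) :
    F f s * F f t = 0 := by
  rw [F, F, wedge_mul]
  obtain ⟨i, hi⟩ := tup_surj s x hxs
  obtain ⟨j, hj⟩ := tup_surj t x hxt
  refine AlternatingMap.map_eq_zero_of_eq _ _
    (i := Fin.castAdd t.card i) (j := Fin.natAdd s.card j) ?_ ?_
  · rw [Fin.append_left, Fin.append_right, hi, hj]
  · intro hcontra
    have := congrArg Fin.val hcontra
    simp only [Fin.coe_castAdd, Fin.coe_natAdd] at this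
    have := i.isLt
    omega

lemma Ftop_eq : Ftop f = ((Pi.basisFun ℂ (Fin N)).det ⇑f) • mono N (fun j : Fin N => j) := by
  rw [Ftop, top_wedge, ell_wedge]

lemma det_f_ne : (Pi.basisFun ℂ (Fin N)).det ⇑f ≠ 0 :=
  (Module.Basis.isUnit_det _ f).ne_zero

lemma Ftop_ne_zero : Ftop f ≠ 0 := by
  rw [Ftop_eq]
  exact smul_ne_zero (det_f_ne f) mono_id_ne_zero

include f in
lemma eps_compl (s : Finset (Fin N)) :
    eps sᶜ = ((-1 : ℂ)) ^ (sᶜ.card * s.card) * eps s := by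
  have h1 : F f sᶜ * F f s = ((-1 : ℂ)) ^ (sᶜ.card * s.card) • (F f s * F f sᶜ) :=
    wedge_mul_comm _ _
  have h2 : F f sᶜ * F f s = eps sᶜ • Ftop f := by
    have := F_mul_compl f sᶜ
    rwa [compl_compl] at this
  rw [h2, F_mul_compl f s, smul_smul] at h1
  exact smul_left_injective ℂ (Ftop_ne_zero f) h1

/-- Any homogeneous element is spanned by the subset monomials. -/
lemma degE_le_span (j : ℕ) :
    degE N j ≤ Submodule.span ℂ
      (Set.range (fun u : {u : Finset (Fin N) // u.card = j} => F f u.1)) := by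
  rw [show degE N j = ⋀[ℂ]^j (W N) from rfl, ← ιMulti_span_fixedDegree]
  refine Submodule.span_le.2 ?_
  rintro _ ⟨v, rfl⟩
  rw [wedge_expand f v]
  refine Submodule.sum_mem _ fun r _ => Submodule.smul_mem _ _ ?_
  by_cases hr : Function.Injective r
  · set u : Finset (Fin N) := Finset.univ.image r with hu
    have hcard : u.card = j := by
      rw [hu, Finset.card_image_of_injective _ hr, Finset.card_univ, Fintype.card_fin]
    have hmem : ∀ i : Fin j, r i ∈ u := fun i => by
      rw [hu]; exact Finset.mem_image_of_mem r (Finset.mem_univ i)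
    set ρ : Fin j → Fin j := fun i =>
      Fin.cast hcard ((u.orderIsoOfFin rfl).symm ⟨r i, hmem i⟩) with hρ
    have hρinj : Function.Injective ρ := by
      intro a b hab
      have h1 : ((u.orderIsoOfFin rfl).symm ⟨r a, hmem a⟩ : Fin u.card)
          = (u.orderIsoOfFin rfl).symm ⟨r b, hmem b⟩ := by
        apply Fin.ext
        show (ρ a : ℕ) = (ρ b : ℕ)
        exact congrArg Fin.val hab
      have h2 := congrArg (u.orderIsoOfFin rfl) h1
      simp only [OrderIso.apply_symm_apply] at h2
      exact hr (congrArg Subtype.val h2)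
    set σ : Equiv.Perm (Fin j) := Equiv.ofBijective ρ (Finite.injective_iff_bijective.1 hρinj)
      with hσdef
    have hkey : (fun i => f (r i))
        = ((fun i => f (tup u i)) ∘ Fin.cast hcard.symm) ∘ ⇑σ := by
      funext i
      simp only [Function.comp_apply, hσdef, Equiv.ofBijective_apply, hρ]
      have hc : Fin.cast hcard.symm (Fin.cast hcard ((u.orderIsoOfFin rfl).symm ⟨r i, hmem i⟩))
          = (u.orderIsoOfFin rfl).symm ⟨r i, hmem i⟩ := Fin.ext rfl
      rw [hc]
      have : tup u ((u.orderIsoOfFin rfl).symm ⟨r i, hmem i⟩) = r i := by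
        rw [tup]
        simp
      rw [this]
    rw [hkey, AlternatingMap.map_perm, sign_smul_eq]
    refine Submodule.smul_mem _ _ ?_
    rw [wedge_cast hcard.symm (fun i => f (tup u i))]
    exact Submodule.subset_span ⟨⟨u, hcard⟩, rfl⟩
  · rw [Function.not_injective_iff] at hr
    obtain ⟨a, b, hab, hne⟩ := hr
    rw [AlternatingMap.map_eq_zero_of_eq _ _ (i := a) (j := b) (by rw [hab]) hne]
    exact Submodule.zero_mem _

/-- Cancellation against all `k`-monomials. -/
lemma mul_cancel (k : ℕ) (hk : k ≤ N) (z : E N) (hz : z ∈ degE N (N - k))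
    (h0 : ∀ t : Finset (Fin N), t.card = k → F f t * z = 0) : z = 0 := by
  have hspan := degE_le_span f (N - k) hz
  rw [Submodule.mem_span_range_iff_exists_fun] at hspan
  obtain ⟨c, hc⟩ := hspan
  suffices hcz : ∀ u : {u : Finset (Fin N) // u.card = N - k}, c u = 0 by
    rw [← hc]
    exact Finset.sum_eq_zero fun u _ => by rw [hcz u, zero_smul]
  intro u
  have hcardc : (u.1ᶜ).card = k := by
    rw [Finset.card_compl, Fintype.card_fin, u.2]; omega
  have h1 := h0 u.1ᶜ hcardc
  rw [← hc, Finset.mul_sum] at h1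
  rw [Finset.sum_eq_single u (fun u' _ hne => ?_) (fun h => absurd (Finset.mem_univ u) h)] at h1
  · -- h1 : F f u.1ᶜ * (c u • F f u.1) = 0
    rw [mul_smul_comm] at h1
    have h2 : F f u.1ᶜ * F f u.1 = eps u.1ᶜ • Ftop f := by
      have := F_mul_compl f u.1ᶜ
      rwa [compl_compl] at this
    rw [h2, smul_smul] at h1
    have h3 : c u * eps u.1ᶜ = 0 := by
      by_contra hne
      exact Ftop_ne_zero f (by
        have := smul_eq_zero.1 h1
        tauto)
    rcases mul_eq_zero.1 h3 with h | h
    · exact h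
    · exact absurd h (eps_ne_zero _)
  · -- u' ≠ u : disjointness
    rw [mul_smul_comm]
    have hx : ∃ x, x ∈ u'.1 ∧ x ∈ u.1ᶜ := by
      by_contra hno
      push_neg at hno
      have hsub : u'.1 ⊆ u.1 := fun x hxu' => by
        have := hno x hxu'
        simpa [Finset.mem_compl] using this
      have : u'.1 = u.1 := Finset.eq_of_subset_of_card_le hsub (by rw [u.2, u'.2])
      exact hne (Subtype.ext this)
    obtain ⟨x, hx1, hx2⟩ := hx
    rw [F_common_zero f u.1ᶜ u'.1 x hx2 hx1, smul_zero]

end Fmono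

/-! ### Stage 5 : the Hodge operator on subset monomials -/

section Main

variable {g : W N →ₗ[ℂ] W N →ₗ[ℂ] ℂ} {G : ℕ → (E N →ₗ[ℂ] E N →ₗ[ℂ] ℂ)}
  {st : E N →ₛₗ[starRingEnd ℂ] E N} {m : ℂ} {T : E N →ₗ[ℂ] E N}

lemma Tdef' (H : HodgeData N g G st m T) {k : ℕ} (φ' : E N) (hφ' : φ' ∈ degE N k)
    (v : Fin k → W N) :
    ιMulti ℂ k v * T φ' =
      (((k.factorial : ℂ))⁻¹ * G k (ιMulti ℂ k v) φ') • (m • mono N (fun j : Fin N => j)) := by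
  have hmono : ∀ r : Fin k → Fin N, mono N r * T φ' =
      (((k.factorial : ℂ))⁻¹ * G k (mono N r) φ') • (m • mono N (fun j : Fin N => j)) := by
    intro r
    have h := H.hTdef k (mono N r) (mono_mem r) φ' hφ'
    rwa [H.hst k r] at h
  have hme : ∀ r : Fin k → Fin N,
      ιMulti ℂ k (fun j => (Pi.basisFun ℂ (Fin N)) (r j)) = mono N r :=
    fun r => (mono_eq r).symm
  rw [wedge_expand (Pi.basisFun ℂ (Fin N)) v, Finset.sum_mul]
  rw [Finset.sum_congr rfl (fun r _ => by
    rw [smul_mul_assoc, hme r, hmono r])]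
  rw [map_sum, LinearMap.sum_apply, Finset.mul_sum, Finset.sum_smul]
  refine Finset.sum_congr rfl fun r _ => ?_
  rw [LinearMap.map_smul (G k), LinearMap.smul_apply, smul_eq_mul, hme r, smul_smul]
  congr 1
  ring

lemma F_empty (f : Module.Basis (Fin N) ℂ (W N)) : F f ∅ = 1 := ιMulti_zero_apply _

lemma T_F (H : HodgeData N g G st m T) (f : Module.Basis (Fin N) ℂ (W N))
    (horth : ∀ i j, i ≠ j → g (f i) (f j) = 0) (s : Finset (Fin N)) :
    T (F f s) = ((m * ∏ x ∈ s, g (f x) (f x)) * eps s *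
      ((Pi.basisFun ℂ (Fin N)).det ⇑f)⁻¹) • F f sᶜ := by
  set d : ℂ := (Pi.basisFun ℂ (Fin N)).det ⇑f with hd
  have hd0 : d ≠ 0 := det_f_ne f
  set y : E N := ((m * ∏ x ∈ s, g (f x) (f x)) * eps s * d⁻¹) • F f sᶜ with hy
  have hkN : s.card ≤ N := by
    have h := Finset.card_le_univ s
    rwa [Fintype.card_fin] at h
  have hcc : sᶜ.card = N - s.card := by
    rw [Finset.card_compl, Fintype.card_fin]
  have hfac : ((s.card.factorial : ℂ)) ≠ 0 := Nat.cast_ne_zero.2 s.card.factorial_ne_zero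
  have hTdegF : T (F f s) ∈ degE N (N - s.card) := H.hTdeg s.card (F f s) (F_mem f s)
  have hymem : y ∈ degE N (N - s.card) := by
    rw [hy]
    apply Submodule.smul_mem
    have h := F_mem f sᶜ
    rwa [hcc] at h
  have h0 : ∀ t : Finset (Fin N), t.card = s.card → F f t * (T (F f s) - y) = 0 := by
    intro t ht
    rw [mul_sub]
    have hFt : F f t
        = ιMulti ℂ s.card ((fun i => f (tup t i)) ∘ Fin.cast ht.symm) :=
      (wedge_cast ht.symm _).symm
    have hA : F f t * T (F f s) =
        (((s.card.factorial : ℂ))⁻¹ *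
          G s.card (ιMulti ℂ s.card ((fun i => f (tup t i)) ∘ Fin.cast ht.symm)) (F f s)) •
        (m • mono N (fun j : Fin N => j)) := by
      rw [hFt]
      exact Tdef' H (F f s) (F_mem f s) _
    have hG1 : G s.card (ιMulti ℂ s.card ((fun i => f (tup t i)) ∘ Fin.cast ht.symm)) (F f s)
        = (s.card.factorial : ℂ) *
          (gram g ((fun i => f (tup t i)) ∘ Fin.cast ht.symm) (fun i => f (tup s i))).det :=
      G_wedge H.hG _ _
    by_cases hts : t = s
    · subst hts
      have hvt : ((fun i => f (tup t i)) ∘ Fin.cast ht.symm) = fun i => f (tup t i) := by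
        funext i
        exact congrArg f (congrArg (tup t) (Fin.ext rfl))
      have hgram : gram g (fun i => f (tup t i)) (fun i => f (tup t i))
          = Matrix.diagonal (fun i => g (f (tup t i)) (f (tup t i))) := by
        ext i j
        by_cases hij : i = j
        · subst hij; rw [Matrix.diagonal_apply_eq]; rfl
        · rw [Matrix.diagonal_apply_ne _ hij]
          exact horth _ _ (fun hh => hij (tup_inj t hh))
      have hprod : (∏ i, g (f (tup t i)) (f (tup t i))) = ∏ x ∈ t, g (f x) (f x) := by
        rw [← Finset.prod_coe_sort t (fun x => g (f x) (f x))]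
        exact Equiv.prod_comp (t.orderIsoOfFin rfl).toEquiv (fun x : t => g (f x) (f x))
      have hAval : F f t * T (F f t) = ((∏ x ∈ t, g (f x) (f x)) * m) •
          mono N (fun j : Fin N => j) := by
        rw [hA, hG1, hvt, hgram, Matrix.det_diagonal, hprod, smul_smul]
        congr 1
        rw [inv_mul_cancel_left₀ hfac]
      have hBval : F f t * y = ((∏ x ∈ t, g (f x) (f x)) * m) •
          mono N (fun j : Fin N => j) := by
        rw [hy, mul_smul_comm, F_mul_compl f t, Ftop_eq, smul_smul, smul_smul]
        congr 1
        have he2 := eps_sq t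
        have hdd : d * d⁻¹ = 1 := mul_inv_cancel₀ hd0
        linear_combination (m * (∏ x ∈ t, g (f x) (f x)) * d⁻¹ * d) * he2 +
          (m * (∏ x ∈ t, g (f x) (f x))) * hdd
      rw [hAval, hBval, sub_self]
    · obtain ⟨x, hxt, hxs⟩ : ∃ x, x ∈ t ∧ x ∉ s := by
        by_contra hno
        push_neg at hno
        exact hts (Finset.eq_of_subset_of_card_le hno (le_of_eq ht.symm))
      obtain ⟨i0, hi0⟩ := tup_surj t x hxt
      have hdet0 : (gram g ((fun i => f (tup t i)) ∘ Fin.cast ht.symm)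
          (fun i => f (tup s i))).det = 0 := by
        apply Matrix.det_eq_zero_of_row_eq_zero (Fin.cast ht i0)
        intro j
        have hv : ((fun i => f (tup t i)) ∘ Fin.cast ht.symm) (Fin.cast ht i0) = f x := by
          rw [← hi0]
          exact congrArg f (congrArg (tup t) (Fin.ext rfl))
        show g (((fun i => f (tup t i)) ∘ Fin.cast ht.symm) (Fin.cast ht i0)) (f (tup s j)) = 0
        rw [hv]
        exact horth _ _ (fun hh => hxs (hh ▸ tup_mem s j))
      have hB0 : F f t * y = 0 := by
        rw [hy, mul_smul_comm,
          F_common_zero f t sᶜ x hxt (Finset.mem_compl.2 hxs), smul_zero]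
      rw [hA, hG1, hdet0, mul_zero, mul_zero, zero_smul, hB0, sub_self]
  have hz := mul_cancel f s.card hkN (T (F f s) - y)
    (Submodule.sub_mem _ hTdegF hymem) h0
  have := sub_eq_zero.1 hz
  rw [this]

lemma main (H : HodgeData N g G st m T)
    (hsymm : ∀ v w : W N, g v w = g w v) :
    ∀ k : ℕ, k ≤ N → ∀ φ ∈ degE N k,
      T (T φ) = ((-1 : ℂ)) ^ (k * (N - k)) • (T (T 1) * φ) := by
  intro k hk φ hφ
  obtain ⟨f, horth, -⟩ := exists_orth g H.nondeg hsymm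
  set d : ℂ := (Pi.basisFun ℂ (Fin N)).det ⇑f with hd
  have hT1 : T (1 : E N) = (m * eps (∅ : Finset (Fin N)) * d⁻¹) •
      F f (∅ : Finset (Fin N))ᶜ := by
    rw [show (1 : E N) = F f ∅ from (F_empty f).symm, T_F H f horth ∅,
      Finset.prod_empty, mul_one]
  have hee : eps ((∅ : Finset (Fin N))ᶜ) = eps (∅ : Finset (Fin N)) := by
    have h := eps_compl f (∅ : Finset (Fin N))
    simpa using h
  have hTT1 : T (T (1 : E N)) = ((m * eps (∅ : Finset (Fin N)) * d⁻¹) *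
      ((m * ∏ x ∈ ((∅ : Finset (Fin N))ᶜ), g (f x) (f x)) *
        eps ((∅ : Finset (Fin N))ᶜ) * d⁻¹)) • (1 : E N) := by
    rw [hT1, map_smul, T_F H f horth (∅ : Finset (Fin N))ᶜ, compl_compl, F_empty f, smul_smul]
  have key : ∀ u : Finset (Fin N), u.card = k →
      T (T (F f u)) = ((-1 : ℂ)) ^ (k * (N - k)) • (T (T 1) * F f u) := by
    intro u hu
    have hcc : uᶜ.card = N - k := by rw [Finset.card_compl, Fintype.card_fin, hu]
    rw [T_F H f horth u, map_smul, T_F H f horth uᶜ, compl_compl, smul_smul, hTT1,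
      smul_mul_assoc, one_mul, smul_smul]
    congr 1
    have hcompl := eps_compl f u
    rw [hcc, hu] at hcompl
    rw [hcompl, hee, mul_comm (N - k) k]
    have he2 := eps_sq u
    have he0 := eps_sq (∅ : Finset (Fin N))
    have hps : (∏ x ∈ u, g (f x) (f x)) * (∏ x ∈ uᶜ, g (f x) (f x))
        = ∏ x ∈ ((∅ : Finset (Fin N))ᶜ), g (f x) (f x) := by
      rw [Finset.prod_mul_prod_compl, Finset.compl_empty]
    linear_combination
      (m * m * d⁻¹ * d⁻¹ * ((-1 : ℂ)) ^ (k * (N - k)) *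
        (∏ x ∈ u, g (f x) (f x)) * (∏ x ∈ uᶜ, g (f x) (f x))) * he2 +
      (m * m * d⁻¹ * d⁻¹ * ((-1 : ℂ)) ^ (k * (N - k))) * hps -
      (m * m * d⁻¹ * d⁻¹ * ((-1 : ℂ)) ^ (k * (N - k)) *
        (∏ x ∈ ((∅ : Finset (Fin N))ᶜ), g (f x) (f x))) * he0
  have hspan := degE_le_span f k hφ
  rw [Submodule.mem_span_range_iff_exists_fun] at hspan
  obtain ⟨c, hc⟩ := hspan
  rw [← hc]
  simp only [map_sum, map_smul]
  rw [Finset.mul_sum, Finset.smul_sum]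
  refine Finset.sum_congr rfl fun u _ => ?_
  rw [key u.1 u.2, mul_smul_comm]
  exact smul_comm _ _ _

end Main

end HodgeAux

/-- if `g` is symmetric on `W`, then for every `0 ≤ k ≤ N` and `φ ∈ ΛᵏW`,
`T(T(φ)) = (−1)^{k(N−k)} T(T(1)) φ` (where `T(T(1)) ∈ Λ⁰W = ℂ`). -/
theorem classical_hodge_square (N : ℕ) (hN : 1 ≤ N)
    (g : W N →ₗ[ℂ] W N →ₗ[ℂ] ℂ) (G : ℕ → (E N →ₗ[ℂ] E N →ₗ[ℂ] ℂ))
    (st : E N →ₛₗ[starRingEnd ℂ] E N) (m : ℂ) (T : E N →ₗ[ℂ] E N)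
    (H : HodgeData N g G st m T)
    (hsymm : ∀ v w : W N, g v w = g w v) :
    ∀ k : ℕ, k ≤ N → ∀ φ ∈ degE N k,
      T (T φ) = ((-1 : ℂ)) ^ (k * (N - k)) • (T (T 1) * φ) :=
  HodgeAux.main H hsymm

end
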